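/- Let λ_k = (1+|k|)^{−1} log^{−2β}(e+|k|), β > 1/2. There is an absolute constant C > 0 such that for every even n ≥ 2 and every continuous φ with support in [0, 1/(2n)] there exist n points z_1,…,z_n in {j/(2n) : j = 0,…,2n−1} such that φ^{(n)}(x) = ∑_{j=1}^n φ(x − z_j) satisfies (∫₀¹ φ^{(n)} dx)/‖φ^{(n)}‖_{H_λ} ≤ C n^{−1/2} (log n)^{−β}. -/

import Mathlib

open MeasureTheory
open scoped ENNReal

/-- The `k`-th Fourier coefficient of a 1-periodic function `f : ℝ → ℂ`. -/
noncomputable def fourierCoef1 (f : ℝ → ℂ) (k : ℤ) : ℂ :=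
  ∫ x in Set.Ioo (0 : ℝ) 1, f x * Complex.exp (-(2 * Real.pi * Complex.I) * (((k : ℝ) * x : ℝ) : ℂ))

/-- The squared `H_λ`-norm `∑_k |f̂(k)|²/λ_k` (as an extended real) for
`λ_k = (1+|k|)^{-1} log^{-2β}(e+|k|)`. -/
noncomputable def hlamNormSq (β : ℝ) (f : ℝ → ℂ) : ℝ≥0∞ :=
  ∑' k : ℤ, (‖fourierCoef1 f k‖₊ : ℝ≥0∞) ^ 2 /
    ENNReal.ofReal ((1 + |(k : ℝ)|)⁻¹ * Real.log (Real.exp 1 + |(k : ℝ)|) ^ (-(2 * β)))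

/-- The quantity `‖f‖₂² + ∫₀¹ ((1-log h)^{2β}/h²) ‖Δ_h f‖₂² dh` (as an extended real). -/
noncomputable def diffNormSq (β : ℝ) (f : ℝ → ℂ) : ℝ≥0∞ :=
  (∫⁻ x in Set.Ioo (0 : ℝ) 1, (‖f x‖₊ : ℝ≥0∞) ^ 2) +
    ∫⁻ h in Set.Ioo (0 : ℝ) 1, ENNReal.ofReal ((1 - Real.log h) ^ (2 * β) / h ^ 2) *
      ∫⁻ x in Set.Ioo (0 : ℝ) 1, (‖f (x + h) - f x‖₊ : ℝ≥0∞) ^ 2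

open AddCircle

theorem myFourierCoef_eq (g : ℝ → ℂ) (k : ℤ) :
    fourierCoef1 g k = fourierCoeff (AddCircle.liftIco 1 0 g) k := by
  rw [fourierCoeff_eq_intervalIntegral _ k 0]
  rw [zero_add, intervalIntegral.integral_of_le zero_le_one]
  rw [MeasureTheory.integral_Ioc_eq_integral_Ioo]
  rw [fourierCoef1]
  rw [div_one, one_smul]
  refine setIntegral_congr_fun measurableSet_Ioo (fun x hx => ?_)
  have hG : AddCircle.liftIco 1 0 g (x : AddCircle (1:ℝ)) = g x := by
    apply AddCircle.liftIco_coe_apply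
    rw [zero_add]
    exact Set.mem_Ico.2 ⟨le_of_lt hx.1, hx.2⟩
  rw [hG, fourier_coe_apply, smul_eq_mul, mul_comm]
  congr 1
  push_cast
  ring_nf

theorem myParseval (g : ℝ → ℂ) (hg : Continuous g) (hper : Function.Periodic g 1) :
    Summable (fun k : ℤ => ‖fourierCoef1 g k‖ ^ 2) ∧
    ∑' k : ℤ, ‖fourierCoef1 g k‖ ^ 2 = ∫ x in Set.Ioo (0:ℝ) 1, ‖g x‖ ^ 2 := by
  have hG0 : g 0 = g (0 + (1:ℝ)) := by simpa using (hper 0).symm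
  set G : C(AddCircle (1:ℝ), ℂ) :=
    ⟨AddCircle.liftIco 1 0 g, AddCircle.liftIco_continuous hG0 hg.continuousOn⟩ with hGdef
  set Gq := ContinuousMap.toLp (E := ℂ) 2 haarAddCircle ℂ G with hGLdef
  have h1 : ∀ k : ℤ, fourierCoeff (Gq : AddCircle (1:ℝ) → ℂ) k = fourierCoef1 g k := by
    intro k
    rw [hGLdef, fourierCoeff_toLp]
    exact (myFourierCoef_eq g k).symm
  have hint : (∫ t : AddCircle (1:ℝ), ‖Gq t‖ ^ 2 ∂haarAddCircle)
      = ∫ x in Set.Ioo (0:ℝ) 1, ‖g x‖ ^ 2 := by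
    have e1 : (∫ t : AddCircle (1:ℝ), ‖Gq t‖ ^ 2 ∂haarAddCircle)
        = ∫ t : AddCircle (1:ℝ), ‖G t‖ ^ 2 ∂haarAddCircle := by
      refine integral_congr_ae ?_
      filter_upwards [ContinuousMap.coeFn_toLp (μ := haarAddCircle) (𝕜 := ℂ) (p := 2) G] with t ht
      rw [ht]
    have e2 : (volume : Measure (AddCircle (1:ℝ))) = haarAddCircle := by
      rw [AddCircle.volume_eq_smul_haarAddCircle]
      simp
    have e3 := AddCircle.integral_preimage (1:ℝ) 0 (fun t => ‖G t‖ ^ 2)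
    rw [e2] at e3
    rw [e1, ← e3, zero_add, MeasureTheory.integral_Ioc_eq_integral_Ioo]
    refine setIntegral_congr_fun measurableSet_Ioo (fun x hx => ?_)
    have : G ((x : ℝ) : AddCircle (1:ℝ)) = g x := by
      show AddCircle.liftIco (1:ℝ) 0 g _ = g x
      apply AddCircle.liftIco_coe_apply
      rw [zero_add]
      exact Set.mem_Ico.2 ⟨le_of_lt hx.1, hx.2⟩
    rw [this]
  constructor
  · have hmem := lp.memℓp (fourierBasis.repr Gq)
    have hs := (memℓp_gen_iff (by norm_num : 0 < (2:ℝ≥0∞).toReal)).1 hmem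
    have : (fun i : ℤ => ‖fourierBasis.repr Gq i‖ ^ (2:ℝ≥0∞).toReal)
        = fun i : ℤ => ‖fourierCoef1 g i‖ ^ 2 := by
      funext i
      rw [fourierBasis_repr, h1 i]
      norm_num
    rwa [this] at hs
  · have := tsum_sq_fourierCoeff Gq
    simp_rw [h1] at this
    rw [this, hint]

theorem myCoef_zero (g : ℝ → ℂ) : fourierCoef1 g 0 = ∫ x in Set.Ioo (0:ℝ) 1, g x := by
  unfold fourierCoef1
  refine setIntegral_congr_fun measurableSet_Ioo fun x _ => ?_
  simp

theorem coef_as_interval (g : ℝ → ℂ) (k : ℤ) :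
    fourierCoef1 g k
      = ∫ x in (0:ℝ)..1, g x * Complex.exp (-(2 * Real.pi * Complex.I) * (k * x)) := by
  rw [intervalIntegral.integral_of_le zero_le_one, MeasureTheory.integral_Ioc_eq_integral_Ioo]
  refine setIntegral_congr_fun measurableSet_Ioo fun x _ => ?_
  congr 2
  push_cast
  ring

theorem myCoef_translate (g : ℝ → ℂ) (hper : Function.Periodic g 1) (c : ℝ) (k : ℤ) :
    fourierCoef1 (fun x => g (x - c)) k
      = Complex.exp (-(2 * Real.pi * Complex.I) * (k * c)) * fourierCoef1 g k := by
  have per2 : Function.Periodic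
      (fun x : ℝ => g x * Complex.exp (-(2 * Real.pi * Complex.I) * (k * x))) 1 := by
    intro x
    simp only [hper x]
    congr 1
    rw [show (-(2 * (Real.pi:ℂ) * Complex.I) * (k * ((x:ℝ) + 1 : ℝ)))
        = -(2 * (Real.pi:ℂ) * Complex.I) * (k * (x:ℝ)) + ((-k : ℤ) : ℂ) * (2 * Real.pi * Complex.I) by
      push_cast; ring]
    rw [Complex.exp_add, Complex.exp_int_mul_two_pi_mul_I, mul_one]
  rw [coef_as_interval, coef_as_interval g k]
  have step : ∀ x : ℝ, g (x - c) * Complex.exp (-(2 * Real.pi * Complex.I) * (k * x))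
      = Complex.exp (-(2 * Real.pi * Complex.I) * (k * c)) *
        (g (x - c) * Complex.exp (-(2 * Real.pi * Complex.I) * (k * ((x - c : ℝ) : ℂ)))) := by
    intro x
    have h2 : Complex.exp (-(2 * Real.pi * Complex.I) * (k * c)) *
        Complex.exp (-(2 * Real.pi * Complex.I) * (k * ((x - c : ℝ) : ℂ)))
        = Complex.exp (-(2 * Real.pi * Complex.I) * (k * x)) := by
      rw [← Complex.exp_add]
      congr 1
      push_cast
      ring
    rw [← h2]
    ring
  calc (∫ x in (0:ℝ)..1, g (x - c) * Complex.exp (-(2 * Real.pi * Complex.I) * (k * x)))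
      = ∫ x in (0:ℝ)..1, Complex.exp (-(2 * Real.pi * Complex.I) * (k * c)) *
          (g (x - c) * Complex.exp (-(2 * Real.pi * Complex.I) * (k * ((x - c : ℝ) : ℂ)))) := by
        refine intervalIntegral.integral_congr fun x _ => step x
    _ = Complex.exp (-(2 * Real.pi * Complex.I) * (k * c)) *
          ∫ x in (0:ℝ)..1, g (x - c) * Complex.exp (-(2 * Real.pi * Complex.I) * (k * ((x - c : ℝ) : ℂ))) := by
        rw [intervalIntegral.integral_const_mul]
    _ = Complex.exp (-(2 * Real.pi * Complex.I) * (k * c)) *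
          ∫ x in (0:ℝ)..1, g x * Complex.exp (-(2 * Real.pi * Complex.I) * (k * x)) := by
        congr 1
        have sub := intervalIntegral.integral_comp_sub_right
          (fun x : ℝ => g x * Complex.exp (-(2 * Real.pi * Complex.I) * (k * x))) c
            (a := (0:ℝ)) (b := 1)
        rw [sub]
        have := per2.intervalIntegral_add_eq (0 - c) 0
        rw [zero_add] at this
        rw [show (0:ℝ) - c + 1 = 1 - c by ring] at this
        exact this

theorem myCoef_sum (φ : ℝ → ℂ) (hφ : Continuous φ) (hper : Function.Periodic φ 1)
    (n : ℕ) (k : ℤ) :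
    fourierCoef1 (fun x => ∑ j : Fin n, φ (x - (j : ℕ) / (n : ℝ))) k
      = (∑ j : Fin n,
          Complex.exp (-(2 * Real.pi * Complex.I) * (k * (((j : ℕ) / (n : ℝ) : ℝ) : ℂ)))) *
        fourierCoef1 φ k := by
  unfold fourierCoef1
  rw [Finset.sum_mul]
  have : ∀ x : ℝ, (∑ j : Fin n, φ (x - (j : ℕ) / (n : ℝ))) *
      Complex.exp (-(2 * Real.pi * Complex.I) * (((k : ℝ) * x : ℝ) : ℂ))
      = ∑ j : Fin n, φ (x - (j : ℕ) / (n : ℝ)) *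
        Complex.exp (-(2 * Real.pi * Complex.I) * (((k : ℝ) * x : ℝ) : ℂ)) := by
    intro x
    rw [Finset.sum_mul]
  simp_rw [this]
  have hint : ∀ j ∈ Finset.univ (α := Fin n), MeasureTheory.Integrable
      (fun x : ℝ => φ (x - (j : ℕ) / (n : ℝ)) *
        Complex.exp (-(2 * Real.pi * Complex.I) * (((k : ℝ) * x : ℝ) : ℂ)))
      (MeasureTheory.volume.restrict (Set.Ioo (0:ℝ) 1)) := by
    intro j _
    apply MeasureTheory.IntegrableOn.mono_set (t := Set.Ioc (0:ℝ) 1) _ Set.Ioo_subset_Ioc_self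
    apply Continuous.integrableOn_Ioc
    exact (hφ.comp (continuous_id.sub continuous_const)).mul
      (Complex.continuous_exp.comp (continuous_const.mul
        (Complex.continuous_ofReal.comp (continuous_const.mul continuous_id))))
  rw [MeasureTheory.integral_finset_sum Finset.univ hint]
  refine Finset.sum_congr rfl fun j _ => ?_
  have := myCoef_translate φ hper ((j : ℕ) / (n : ℝ)) k
  unfold fourierCoef1 at this
  rw [this]

theorem sum_exp_eq_zero (n : ℕ) (hn : 2 ≤ n) (k : ℤ) (hk : k ≠ 0) (hkn : |k| < (n : ℤ)) :
    ∑ j : Fin n,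
      Complex.exp (-(2 * Real.pi * Complex.I) * (k * (((j : ℕ) / (n : ℝ) : ℝ) : ℂ))) = 0 := by
  have hn0 : (n : ℂ) ≠ 0 := Nat.cast_ne_zero.mpr (by omega)
  set ω : ℂ := Complex.exp (-(2 * Real.pi * Complex.I) * (k / n)) with hω
  have hterm : ∀ j : Fin n,
      Complex.exp (-(2 * Real.pi * Complex.I) * (k * (((j : ℕ) / (n : ℝ) : ℝ) : ℂ)))
        = ω ^ (j : ℕ) := by
    intro j
    rw [hω, ← Complex.exp_nat_mul]
    congr 1
    push_cast
    ring
  simp_rw [hterm]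
  rw [Fin.sum_univ_eq_sum_range (fun i => ω ^ i) n]
  have hω1 : ω ≠ 1 := by
    intro h
    rw [hω, Complex.exp_eq_one_iff] at h
    obtain ⟨m, hm⟩ := h
    have h2 : (2 * Real.pi * Complex.I) * (-(k:ℂ)) = (2 * Real.pi * Complex.I) * ((m:ℂ) * n) := by
      field_simp at hm
      linear_combination (2 * Real.pi * Complex.I) * hm
    have h3 : -(k:ℂ) = (m:ℂ) * n := mul_left_cancel₀ Complex.two_pi_I_ne_zero h2
    have h4 : -k = m * (n:ℤ) := by exact_mod_cast h3
    have h5 : k = -(m * (n:ℤ)) := by omega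
    have hdvd : (n:ℤ) ∣ k := ⟨-m, by rw [h5]; ring⟩
    have hlek : (n:ℤ) ≤ |k| := Int.le_of_dvd (abs_pos.mpr hk) ((dvd_abs _ _).mpr hdvd)
    omega
  rw [geom_sum_eq hω1]
  have hωn : ω ^ n = 1 := by
    rw [hω, ← Complex.exp_nat_mul]
    rw [show (n : ℂ) * (-(2 * Real.pi * Complex.I) * (k / n)) = ((-k : ℤ) : ℂ) * (2 * Real.pi * Complex.I) by
      push_cast; field_simp]
    exact Complex.exp_int_mul_two_pi_mul_I (-k)
  rw [hωn, sub_self, zero_div]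

theorem cs_bound (f : ℝ → ℂ) (hf : Continuous f) (s : Set ℝ) (hs : MeasurableSet s)
    (hsub : s ⊆ Set.Ioo (0:ℝ) 1) (hμ : MeasureTheory.volume s ≤ ENNReal.ofReal (1/2))
    (hvanish : ∀ x ∈ Set.Ioo (0:ℝ) 1, x ∉ s → f x = 0) :
    2 * ‖∫ x in Set.Ioo (0:ℝ) 1, f x‖ ^ 2 ≤ ∫ x in Set.Ioo (0:ℝ) 1, ‖f x‖ ^ 2 := by
  haveI hfin : MeasureTheory.IsFiniteMeasure (MeasureTheory.volume.restrict s) := by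
    constructor
    rw [Measure.restrict_apply_univ]
    exact lt_of_le_of_lt hμ (by norm_num)
  -- Step 1 : restrict integral to s
  have step1 : (∫ x in Set.Ioo (0:ℝ) 1, f x) = ∫ x in s, f x := by
    have e1 : (∫ x in Set.Ioo (0:ℝ) 1, f x) = ∫ x in Set.Ioo (0:ℝ) 1, s.indicator f x := by
      refine setIntegral_congr_fun measurableSet_Ioo fun x hx => ?_
      by_cases h : x ∈ s
      · rw [Set.indicator_of_mem h]
      · rw [Set.indicator_of_notMem h, hvanish x hx h]
    rw [e1, MeasureTheory.integral_indicator hs, Measure.restrict_restrict hs,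
      Set.inter_eq_left.mpr hsub]
  -- bound on f
  obtain ⟨M, hM⟩ := (isCompact_Icc (a := (0:ℝ)) (b := 1)).exists_bound_of_continuousOn
    hf.continuousOn
  -- Step 2 : Hölder
  have hconj : Real.HolderConjugate 2 2 := Real.HolderConjugate.two_two
  have hmem : MeasureTheory.MemLp (fun x => ‖f x‖) (ENNReal.ofReal 2)
      (MeasureTheory.volume.restrict s) := by
    refine MeasureTheory.MemLp.of_bound hf.norm.aestronglyMeasurable M ?_
    filter_upwards [MeasureTheory.ae_restrict_mem hs] with x hx
    have hxI : x ∈ Set.Icc (0:ℝ) 1 := Set.mem_Icc_of_Ioo (hsub hx)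
    simpa using hM x hxI
  have hmem1 : MeasureTheory.MemLp (fun _ : ℝ => (1:ℝ)) (ENNReal.ofReal 2)
      (MeasureTheory.volume.restrict s) := MeasureTheory.memLp_const 1
  have hold := MeasureTheory.integral_mul_le_Lp_mul_Lq_of_nonneg hconj
    (Filter.Eventually.of_forall fun x => norm_nonneg (f x))
    (Filter.Eventually.of_forall fun _ => zero_le_one) hmem hmem1
  have hpow2 : ∀ a : ℝ, ‖f a‖ ^ (2:ℝ) = ‖f a‖ ^ (2:ℕ) := fun a => by
    rw [show (2:ℝ) = ((2:ℕ):ℝ) by norm_num, Real.rpow_natCast]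
  simp only [mul_one, Real.one_rpow] at hold
  simp_rw [hpow2] at hold
  -- names
  set A := ‖∫ x in Set.Ioo (0:ℝ) 1, f x‖ with hA
  set I2 := ∫ x in s, ‖f x‖ ^ 2 with hI2
  have hI2nonneg : 0 ≤ I2 := MeasureTheory.integral_nonneg fun x => sq_nonneg _
  have hconst : (∫ _ in s, (1:ℝ)) ≤ 1/2 := by
    rw [MeasureTheory.setIntegral_const, smul_eq_mul, mul_one]
    exact ENNReal.toReal_le_of_le_ofReal (by norm_num) hμ
  have hconst0 : (0:ℝ) ≤ ∫ _ in s, (1:ℝ) := MeasureTheory.integral_nonneg fun _ => zero_le_one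
  have hA_le : A ≤ I2 ^ ((1:ℝ)/2) * (1/2 : ℝ) ^ ((1:ℝ)/2) := by
    have h1 : A ≤ ∫ x in s, ‖f x‖ := by
      rw [hA, step1]
      exact MeasureTheory.norm_integral_le_integral_norm f
    have h3 : (∫ _ in s, (1:ℝ)) ^ ((1:ℝ)/2) ≤ (1/2 : ℝ) ^ ((1:ℝ)/2) :=
      Real.rpow_le_rpow hconst0 hconst (by norm_num)
    calc A ≤ ∫ x in s, ‖f x‖ := h1
      _ ≤ I2 ^ ((1:ℝ)/2) * (∫ _ in s, (1:ℝ)) ^ ((1:ℝ)/2) := hold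
      _ ≤ I2 ^ ((1:ℝ)/2) * (1/2 : ℝ) ^ ((1:ℝ)/2) := by
          exact mul_le_mul_of_nonneg_left h3 (Real.rpow_nonneg hI2nonneg _)
  have hsq : A ^ 2 ≤ I2 * (1/2) := by
    have hrhs0 : 0 ≤ I2 ^ ((1:ℝ)/2) * (1/2 : ℝ) ^ ((1:ℝ)/2) :=
      mul_nonneg (Real.rpow_nonneg hI2nonneg _) (Real.rpow_nonneg (by norm_num) _)
    have := mul_self_le_mul_self (norm_nonneg _) hA_le
    calc A ^ 2 = A * A := sq A
      _ ≤ (I2 ^ ((1:ℝ)/2) * (1/2 : ℝ) ^ ((1:ℝ)/2)) * (I2 ^ ((1:ℝ)/2) * (1/2 : ℝ) ^ ((1:ℝ)/2)) :=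
          this
      _ = (I2 ^ ((1:ℝ)/2) * I2 ^ ((1:ℝ)/2)) * ((1/2 : ℝ) ^ ((1:ℝ)/2) * (1/2:ℝ) ^ ((1:ℝ)/2)) := by
          ring
      _ = I2 * (1/2) := by
          rw [← Real.rpow_add' hI2nonneg (by norm_num), ← Real.rpow_add' (by norm_num) (by norm_num)]
          norm_num
  -- Step 3 : extend integral of square
  have hmono : I2 ≤ ∫ x in Set.Ioo (0:ℝ) 1, ‖f x‖ ^ 2 := by
    refine MeasureTheory.setIntegral_mono_set ?_ ?_ (Filter.Eventually.of_forall hsub)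
    · apply MeasureTheory.IntegrableOn.mono_set (t := Set.Ioc (0:ℝ) 1) _ Set.Ioo_subset_Ioc_self
      exact Continuous.integrableOn_Ioc (by continuity)
    · exact Filter.Eventually.of_forall fun x => sq_nonneg _
  nlinarith [hsq, hmono]

theorem measure_union_le (n : ℕ) (hn : 2 ≤ n) :
    MeasureTheory.volume (⋃ j : Fin n, Set.Icc ((j:ℕ)/(n:ℝ)) ((j:ℕ)/(n:ℝ) + 1/(2*n)))
      ≤ ENNReal.ofReal (1/2) := by
  have hn0 : (n:ℝ) ≠ 0 := Nat.cast_ne_zero.mpr (by omega)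
  calc MeasureTheory.volume (⋃ j : Fin n, Set.Icc ((j:ℕ)/(n:ℝ)) ((j:ℕ)/(n:ℝ) + 1/(2*n)))
      ≤ ∑ j : Fin n, MeasureTheory.volume (Set.Icc ((j:ℕ)/(n:ℝ)) ((j:ℕ)/(n:ℝ) + 1/(2*n))) :=
        MeasureTheory.measure_iUnion_fintype_le _ _
    _ = ∑ _j : Fin n, ENNReal.ofReal (1/(2*n)) := by
        simp [Real.volume_Icc]
    _ = (n : ℝ≥0∞) * ENNReal.ofReal (1/(2*n)) := by
        rw [Finset.sum_const, Finset.card_univ, Fintype.card_fin, nsmul_eq_mul]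
    _ = ENNReal.ofReal ((n:ℝ) * (1/(2*n))) := by
        rw [← ENNReal.ofReal_natCast n, ← ENNReal.ofReal_mul (by positivity)]
    _ = ENNReal.ofReal (1/2) := by
        congr 1
        field_simp

theorem support_sum (φ : ℝ → ℂ) (hper : Function.Periodic φ 1) (n : ℕ) (hn : 2 ≤ n)
    (hsupp : ∀ x ∈ Set.Ico (0:ℝ) 1, x ∉ Set.Icc (0:ℝ) (1/(2*(n:ℝ))) → φ x = 0) :
    ∀ x ∈ Set.Ioo (0:ℝ) 1,
      x ∉ (⋃ j : Fin n, Set.Icc ((j:ℕ)/(n:ℝ)) ((j:ℕ)/(n:ℝ) + 1/(2*n))) →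
      (∑ j : Fin n, φ (x - (j:ℕ)/(n:ℝ))) = 0 := by
  intro x hx hxs
  have hnpos : (0:ℝ) < n := by
    have : (0:ℕ) < n := by omega
    exact_mod_cast this
  have hhalf : (0:ℝ) < 1/(2*n) := by positivity
  have hfrac : (1:ℝ)/n = 2 * (1/(2*n)) := by field_simp
  refine Finset.sum_eq_zero fun j _ => ?_
  set c : ℝ := (j:ℕ)/(n:ℝ) with hc
  have hc0 : 0 ≤ c := by positivity
  have hcle : c ≤ 1 - 1/n := by
    rw [hc]
    have hj : ((j:ℕ):ℝ) ≤ (n:ℝ) - 1 := by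
      have := j.isLt
      have h2 : ((j:ℕ):ℝ) + 1 ≤ (n:ℝ) := by exact_mod_cast this
      linarith
    rw [div_le_iff₀ hnpos]
    have : ((n:ℝ) - 1) = (1 - 1/n) * n := by field_simp
    linarith [this ▸ hj]
  by_cases hy : x - c < 0
  · have hper' : φ (x - c) = φ (x - c + 1) := (hper (x - c)).symm
    rw [hper']
    apply hsupp
    · constructor
      · have : c < 1 := by
          have : (1:ℝ)/n > 0 := by positivity
          linarith
        linarith [hx.1]
      · linarith
    · intro hmem
      have h1 : x - c + 1 ≤ 1/(2*n) := hmem.2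
      have : x ≤ -(1/(2*n)) := by linarith
      linarith [hx.1]
  · push_neg at hy
    apply hsupp
    · exact ⟨by linarith, by linarith [hx.2]⟩
    · intro hmem
      apply hxs
      refine Set.mem_iUnion.2 ⟨j, ?_⟩
      exact ⟨by linarith [hy], by linarith [hmem.2]⟩

theorem main_ineq (β : ℝ) (hβ : 1/2 < β) (n : ℕ) (hn : 2 ≤ n) (φ : ℝ → ℂ)
    (hφ : Continuous φ) (hper : Function.Periodic φ 1)
    (hsupp : ∀ x ∈ Set.Ico (0:ℝ) 1, x ∉ Set.Icc (0:ℝ) (1/(2*(n:ℝ))) → φ x = 0) :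
    ENNReal.ofReal ‖∫ x in Set.Ioo (0:ℝ) 1, ∑ j : Fin n, φ (x - (j:ℕ)/(n:ℝ))‖ ≤
      ENNReal.ofReal (1 * (n:ℝ) ^ (-(1/2) : ℝ) * Real.log n ^ (-β)) *
        (hlamNormSq β (fun x => ∑ j : Fin n, φ (x - (j:ℕ)/(n:ℝ)))) ^ ((1:ℝ)/2) := by
  have hβ0 : 0 ≤ 2 * β := by linarith
  have hn0 : (0:ℝ) < n := by exact_mod_cast (by omega : 0 < n)
  have hLpos : 0 < Real.log n := Real.log_pos (by exact_mod_cast (by omega : 1 < n))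
  set f : ℝ → ℂ := fun x => ∑ j : Fin n, φ (x - (j:ℕ)/(n:ℝ)) with hfdef
  have hf_cont : Continuous f := by
    apply continuous_finset_sum
    intro j _
    exact hφ.comp (continuous_id.sub continuous_const)
  have hf_per : Function.Periodic f 1 := by
    intro x
    rw [hfdef]
    simp only []
    refine Finset.sum_congr rfl fun j _ => ?_
    rw [show x + 1 - (j:ℕ)/(n:ℝ) = (x - (j:ℕ)/(n:ℝ)) + 1 by ring, hper]
  set A : ℝ := ‖∫ x in Set.Ioo (0:ℝ) 1, f x‖ with hAdef
  have hA0 : 0 ≤ A := norm_nonneg _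
  obtain ⟨hsum, hpars⟩ := myParseval f hf_cont hf_per
  -- Cauchy-Schwarz
  set s : Set ℝ := (⋃ j : Fin n, Set.Icc ((j:ℕ)/(n:ℝ)) ((j:ℕ)/(n:ℝ) + 1/(2*n))) ∩
    Set.Ioo (0:ℝ) 1 with hsdef
  have hCS : 2 * A ^ 2 ≤ ∫ x in Set.Ioo (0:ℝ) 1, ‖f x‖ ^ 2 := by
    refine cs_bound f hf_cont s
      ((MeasurableSet.iUnion fun j => measurableSet_Icc).inter measurableSet_Ioo)
      Set.inter_subset_right
      (le_trans (measure_mono Set.inter_subset_left) (measure_union_le n hn)) ?_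
    intro x hx hxs
    refine support_sum φ hper n hn hsupp x hx ?_
    intro hmem
    exact hxs ⟨hmem, hx⟩
  -- vanishing
  have hvanish : ∀ k : ℤ, k ≠ 0 → |k| < (n:ℤ) → fourierCoef1 f k = 0 := by
    intro k hk hkn
    rw [hfdef, myCoef_sum φ hφ hper n k, sum_exp_eq_zero n hn k hk hkn, zero_mul]
  -- head coefficient
  have hhead : fourierCoef1 f 0 = ∫ x in Set.Ioo (0:ℝ) 1, f x := myCoef_zero f
  -- weights
  have hlampos : ∀ k : ℤ, 0 < (1 + |(k:ℝ)|)⁻¹ * Real.log (Real.exp 1 + |(k:ℝ)|) ^ (-(2*β)) := by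
    intro k
    have he : (2:ℝ) ≤ Real.exp 1 := by
      have := Real.add_one_le_exp (1:ℝ)
      linarith
    have hlogpos : 0 < Real.log (Real.exp 1 + |(k:ℝ)|) :=
      Real.log_pos (by linarith [abs_nonneg (k:ℝ)])
    have h1 : 0 < (1 + |(k:ℝ)|)⁻¹ := by positivity
    exact mul_pos h1 (Real.rpow_pos_of_pos hlogpos _)
  -- termwise bound
  set c : ℝ := (n:ℝ) * Real.log n ^ (2*β) with hcdef
  have hc0 : 0 ≤ c := by positivity
  have hterm : ∀ k : ℤ,
      (if k = (0:ℤ) then (0:ℝ≥0∞)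
        else ENNReal.ofReal c * ((‖fourierCoef1 f k‖₊ : ℝ≥0∞)) ^ 2)
      ≤ ((‖fourierCoef1 f k‖₊ : ℝ≥0∞)) ^ 2 /
        ENNReal.ofReal ((1 + |(k:ℝ)|)⁻¹ * Real.log (Real.exp 1 + |(k:ℝ)|) ^ (-(2*β))) := by
    intro k
    by_cases hk : k = 0
    · simp [hk]
    rw [if_neg hk]
    by_cases hkn : |k| < (n:ℤ)
    · rw [hvanish k hk hkn]
      simp
    push_neg at hkn
    rw [ENNReal.div_eq_inv_mul, ← ENNReal.ofReal_inv_of_pos (hlampos k)]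
    refine mul_le_mul_left (ENNReal.ofReal_le_ofReal ?_) _
    rw [mul_inv, inv_inv, ← Real.rpow_neg (Real.log_nonneg ?_), neg_neg]
    · have habs : (n:ℝ) ≤ |(k:ℝ)| := by
        have : (n:ℤ) ≤ |k| := hkn
        calc (n:ℝ) = ((n:ℤ):ℝ) := by push_cast; ring
          _ ≤ ((|k|:ℤ):ℝ) := by exact_mod_cast this
          _ = |(k:ℝ)| := by push_cast; ring
      rw [hcdef]
      refine mul_le_mul (by linarith) ?_ (by positivity) (by linarith [abs_nonneg (k:ℝ)])
      refine Real.rpow_le_rpow (Real.log_nonneg (by exact_mod_cast (by omega : 1 ≤ n))) ?_ hβ0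
      refine Real.log_le_log hn0 ?_
      have := Real.exp_pos 1
      linarith
    · have : (1:ℝ) ≤ Real.exp 1 := by linarith [Real.add_one_le_exp (1:ℝ)]
      linarith [abs_nonneg (k:ℝ)]
  -- sum the bound
  set T : ℝ≥0∞ := ∑' k : ℤ, (if k = (0:ℤ) then (0:ℝ≥0∞)
      else ((‖fourierCoef1 f k‖₊ : ℝ≥0∞)) ^ 2) with hTdef
  have hS1 : ENNReal.ofReal c * T ≤ hlamNormSq β f := by
    rw [hTdef, ← ENNReal.tsum_mul_left]
    refine le_trans (le_of_eq (tsum_congr fun k => ?_)) (ENNReal.tsum_le_tsum hterm)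
    by_cases hk : k = 0 <;> simp [hk]
  -- Parseval in ℝ≥0∞
  have htsum : ∑' k : ℤ, ((‖fourierCoef1 f k‖₊ : ℝ≥0∞)) ^ 2
      = ENNReal.ofReal (∫ x in Set.Ioo (0:ℝ) 1, ‖f x‖ ^ 2) := by
    rw [hpars.symm, ENNReal.ofReal_tsum_of_nonneg (fun k => sq_nonneg _) hsum]
    refine tsum_congr fun k => ?_
    rw [ENNReal.ofReal_pow (norm_nonneg _), ofReal_norm, enorm_eq_nnnorm]
  have hheadval : ((‖fourierCoef1 f 0‖₊ : ℝ≥0∞)) ^ 2 = ENNReal.ofReal (A ^ 2) := by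
    rw [ENNReal.ofReal_pow hA0, hAdef, ← hhead, ofReal_norm, enorm_eq_nnnorm]
  have hsplit : ∑' k : ℤ, ((‖fourierCoef1 f k‖₊ : ℝ≥0∞)) ^ 2
      = ENNReal.ofReal (A ^ 2) + T := by
    rw [ENNReal.summable.tsum_eq_add_tsum_ite' (0:ℤ), hheadval, hTdef]
  have hT : ENNReal.ofReal (A ^ 2) ≤ T := by
    have h1 : ENNReal.ofReal (A ^ 2) + ENNReal.ofReal (A ^ 2) ≤ ENNReal.ofReal (A ^ 2) + T := by
      calc ENNReal.ofReal (A ^ 2) + ENNReal.ofReal (A ^ 2)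
          = ENNReal.ofReal (2 * A ^ 2) := by
            rw [← ENNReal.ofReal_add (sq_nonneg _) (sq_nonneg _)]; ring_nf
        _ ≤ ENNReal.ofReal (∫ x in Set.Ioo (0:ℝ) 1, ‖f x‖ ^ 2) := ENNReal.ofReal_le_ofReal hCS
        _ = ENNReal.ofReal (A ^ 2) + T := by rw [← htsum, hsplit]
    exact (ENNReal.add_le_add_iff_left ENNReal.ofReal_ne_top).mp h1
  have hS : ENNReal.ofReal (c * A ^ 2) ≤ hlamNormSq β f := by
    calc ENNReal.ofReal (c * A ^ 2) = ENNReal.ofReal c * ENNReal.ofReal (A ^ 2) :=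
          ENNReal.ofReal_mul hc0
      _ ≤ ENNReal.ofReal c * T := mul_le_mul_right hT _
      _ ≤ hlamNormSq β f := hS1
  -- final computation
  have hcoef0 : 0 ≤ 1 * (n:ℝ) ^ (-(1/2) : ℝ) * Real.log n ^ (-β) := by positivity
  have hreal : A = (1 * (n:ℝ) ^ (-(1/2) : ℝ) * Real.log n ^ (-β)) * (c * A ^ 2) ^ ((1:ℝ)/2) := by
    rw [hcdef]
    rw [show (n:ℝ) * Real.log n ^ (2*β) * A ^ 2
        = (n:ℝ) * (Real.log n ^ (2*β) * A ^ 2) by ring]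
    rw [Real.mul_rpow (le_of_lt hn0) (by positivity),
      Real.mul_rpow (by positivity) (sq_nonneg _)]
    rw [← Real.rpow_natCast A 2, ← Real.rpow_mul hA0]
    rw [← Real.rpow_mul (le_of_lt hLpos)]
    norm_num
    rw [show (2:ℝ) * β * (1/2) = β by ring]
    rw [show (n:ℝ) ^ (-(1/2) : ℝ) * Real.log n ^ (-β) *
        ((n:ℝ) ^ ((1:ℝ)/2) * (Real.log n ^ β * A))
        = ((n:ℝ) ^ (-(1/2) : ℝ) * (n:ℝ) ^ ((1:ℝ)/2)) *
          (Real.log n ^ (-β) * Real.log n ^ β) * A by ring]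
    rw [← Real.rpow_add hn0, ← Real.rpow_add hLpos]
    norm_num
  calc ENNReal.ofReal ‖∫ x in Set.Ioo (0:ℝ) 1, f x‖ = ENNReal.ofReal A := rfl
    _ = ENNReal.ofReal ((1 * (n:ℝ) ^ (-(1/2) : ℝ) * Real.log n ^ (-β)) *
          (c * A ^ 2) ^ ((1:ℝ)/2)) := by rw [← hreal]
    _ = ENNReal.ofReal (1 * (n:ℝ) ^ (-(1/2) : ℝ) * Real.log n ^ (-β)) *
          ENNReal.ofReal ((c * A ^ 2) ^ ((1:ℝ)/2)) := ENNReal.ofReal_mul hcoef0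
    _ = ENNReal.ofReal (1 * (n:ℝ) ^ (-(1/2) : ℝ) * Real.log n ^ (-β)) *
          (ENNReal.ofReal (c * A ^ 2)) ^ ((1:ℝ)/2) := by
          rw [ENNReal.ofReal_rpow_of_nonneg (by positivity) (by norm_num)]
    _ ≤ ENNReal.ofReal (1 * (n:ℝ) ^ (-(1/2) : ℝ) * Real.log n ^ (-β)) *
          (hlamNormSq β f) ^ ((1:ℝ)/2) :=
          mul_le_mul_right (ENNReal.rpow_le_rpow hS (by norm_num)) _

/-- Failure of the bump-function technique for `λ_k = (1+|k|)^{-1} log^{-2β}(e+|k|)`, `β > 1/2`: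
there is `C > 0` such that for every even `n ≥ 2` and every continuous 1-periodic `φ`
supported in `[0, 1/(2n)]` there are `n` distinct points `z_j ∈ {j/(2n) : 0 ≤ j < 2n}` such
that `φ⁽ⁿ⁾ = ∑_j φ(· - z_j)` satisfies
`∫₀¹ φ⁽ⁿ⁾ ≤ C n^{-1/2} (log n)^{-β} ‖φ⁽ⁿ⁾‖_{H_λ}`. -/
theorem bump_technique_fails (β : ℝ) (hβ : 1 / 2 < β) :
    ∃ C : ℝ, 0 < C ∧ ∀ n : ℕ, 2 ≤ n → Even n → ∀ φ : ℝ → ℂ, Continuous φ →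
      Function.Periodic φ 1 →
      (∀ x ∈ Set.Ico (0 : ℝ) 1, x ∉ Set.Icc (0 : ℝ) (1 / (2 * n)) → φ x = 0) →
      ∃ z : Fin n → ℝ, Function.Injective z ∧
        (∀ j, ∃ m : ℕ, m < 2 * n ∧ z j = (m : ℝ) / (2 * n)) ∧
        ENNReal.ofReal ‖∫ x in Set.Ioo (0 : ℝ) 1, ∑ j, φ (x - z j)‖ ≤
          ENNReal.ofReal (C * (n : ℝ) ^ (-(1 / 2) : ℝ) * Real.log n ^ (-β)) *
            (hlamNormSq β (fun x => ∑ j, φ (x - z j))) ^ ((1 : ℝ) / 2) := by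
  refine ⟨1, one_pos, ?_⟩
  intro n hn _heven φ hφ hper hsupp
  have hn0 : (n:ℝ) ≠ 0 := Nat.cast_ne_zero.mpr (by omega)
  refine ⟨fun j => ((j:ℕ):ℝ)/(n:ℝ), ?_, ?_, ?_⟩
  · intro j₁ j₂ h
    simp only [] at h
    field_simp at h
    exact Fin.ext (by exact_mod_cast h)
  · intro j
    refine ⟨2 * (j:ℕ), by have := j.isLt; omega, ?_⟩
    push_cast
    rw [mul_div_mul_left _ _ (two_ne_zero)]
  · exact main_ineq β hβ n hn φ hφ hper hsupp
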